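/- For positive definite matrices ρ, σ on a finite-dimensional Hilbert space and α ∈ (−1,0) ∪ (0,1), the matrix identity σ^{−α} (ρ σ^{−α})^{−α/(α−1)} = σ^{−α} ♯_{−α/(1−α)} ρ^{−1} holds, where M^μ for M = ρσ^{−α} is defined via the similarity to σ^{−α/2} ρ σ^{−α/2}. -/

import Mathlib

open Matrix ComplexOrder

/-- Real power of a (Hermitian, in practice positive definite) matrix via spectral calculus. -/
noncomputable def mpow {m : Type*} [Fintype m] [DecidableEq m]
    (A : Matrix m m ℂ) (r : ℝ) : Matrix m m ℂ :=
  if h : A.IsHermitian then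
    (h.eigenvectorUnitary : Matrix m m ℂ) *
      Matrix.diagonal (fun i => ((h.eigenvalues i ^ r : ℝ) : ℂ)) *
      star (h.eigenvectorUnitary : Matrix m m ℂ)
  else A

/-- λ-weighted geometric mean `A♯_λ B = A^{1/2}(A^{-1/2} B A^{-1/2})^λ A^{1/2}`. -/
noncomputable def gmean {m : Type*} [Fintype m] [DecidableEq m]
    (A B : Matrix m m ℂ) (lam : ℝ) : Matrix m m ℂ :=
  mpow A (1/2) * mpow (mpow A (-(1/2)) * B * mpow A (-(1/2))) lam * mpow A (1/2)

/-- Real power of `ρ σ^{-α}`, defined via its similarity to the positive definite matrix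
`σ^{-α/2} ρ σ^{-α/2}`:  `(ρσ^{-α})^μ := σ^{α/2} (σ^{-α/2} ρ σ^{-α/2})^μ σ^{-α/2}`. -/
noncomputable def spow {m : Type*} [Fintype m] [DecidableEq m]
    (ρ σ : Matrix m m ℂ) (α μ : ℝ) : Matrix m m ℂ :=
  mpow σ (α/2) * mpow (mpow σ (-(α/2)) * ρ * mpow σ (-(α/2))) μ * mpow σ (-(α/2))

section Helpers

variable {m : Type*} [Fintype m] [DecidableEq m]

lemma mpow_eq_cfc {A : Matrix m m ℂ} (hA : A.IsHermitian) (r : ℝ) :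
    mpow A r = cfc (fun x : ℝ => x ^ r) A := by
  rw [mpow, dif_pos hA, hA.cfc_eq]
  rfl

lemma spec_pos {A : Matrix m m ℂ} (hA : A.PosDef) : ∀ x ∈ spectrum ℝ A, 0 < x := by
  rw [hA.1.spectrum_real_eq_range_eigenvalues]
  rintro x ⟨i, rfl⟩
  exact hA.eigenvalues_pos i

lemma posDef_conj {M B : Matrix m m ℂ} (hM : M.PosDef) (hB : IsUnit B.det) :
    (Bᴴ * M * B).PosDef := by
  refine Matrix.PosDef.of_dotProduct_mulVec_pos ?_ fun x hx => ?_
  · show (Bᴴ * M * B)ᴴ = Bᴴ * M * B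
    rw [conjTranspose_mul, conjTranspose_mul, conjTranspose_conjTranspose, hM.1.eq,
      Matrix.mul_assoc]
  · have hx' : B *ᵥ x ≠ 0 := by
      intro h
      apply hx
      have h2 := congrArg (fun v => B⁻¹ *ᵥ v) h
      simpa [Matrix.mulVec_mulVec, Matrix.nonsing_inv_mul B hB] using h2
    have key : star x ⬝ᵥ ((Bᴴ * M * B) *ᵥ x) = star (B *ᵥ x) ⬝ᵥ (M *ᵥ (B *ᵥ x)) := by
      rw [star_mulVec, Matrix.mul_assoc, ← Matrix.mulVec_mulVec, Matrix.dotProduct_mulVec,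
        Matrix.mulVec_mulVec]
    rw [key]
    exact hM.dotProduct_mulVec_pos hx'

lemma mpow_posDef {A : Matrix m m ℂ} (hA : A.PosDef) (r : ℝ) : (mpow A r).PosDef := by
  rw [mpow, dif_pos hA.1]
  set U := (hA.1.eigenvectorUnitary : Matrix m m ℂ) with hU
  have hmem := hA.1.eigenvectorUnitary.2
  have h1 : U * star U = 1 := hmem.2
  have hDet : IsUnit (star U).det := Matrix.isUnit_det_of_left_inverse h1
  have hD : (Matrix.diagonal (fun i => ((hA.1.eigenvalues i ^ r : ℝ) : ℂ))).PosDef := by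
    refine Matrix.posDef_diagonal_iff.mpr fun i => ?_
    exact Complex.zero_lt_real.mpr (Real.rpow_pos_of_pos (hA.eigenvalues_pos i) r)
  have h2 := posDef_conj hD hDet
  rwa [← star_eq_conjTranspose, star_star] at h2

lemma contOn (A : Matrix m m ℂ) (f : ℝ → ℝ) : ContinuousOn f (spectrum ℝ A) :=
  (Matrix.finite_real_spectrum (A := A)).continuousOn f

lemma mul_mpow {A : Matrix m m ℂ} (hA : A.PosDef) (r s : ℝ) :
    mpow A r * mpow A s = mpow A (r + s) := by
  rw [mpow_eq_cfc hA.1 r, mpow_eq_cfc hA.1 s, mpow_eq_cfc hA.1 (r + s),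
    ← cfc_mul _ _ A (contOn A _) (contOn A _)]
  exact cfc_congr fun x hx => (Real.rpow_add (spec_pos hA x hx) r s).symm

lemma mpow_mpow {A : Matrix m m ℂ} (hA : A.PosDef) (r s : ℝ) :
    mpow (mpow A r) s = mpow A (r * s) := by
  have h1 : (mpow A r).PosDef := mpow_posDef hA r
  rw [mpow_eq_cfc h1.1 s, mpow_eq_cfc hA.1 r, mpow_eq_cfc hA.1 (r * s)]
  refine ((cfc_comp (fun x : ℝ => x ^ s) (fun x : ℝ => x ^ r) A hA.1
      (((Matrix.finite_real_spectrum (A := A)).image _).continuousOn _)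
      (contOn A _)).symm.trans ?_)
  refine cfc_congr fun x hx => ?_
  simp only [Function.comp_apply]
  exact (Real.rpow_mul (spec_pos hA x hx).le r s).symm

lemma mpow_one' {A : Matrix m m ℂ} (hA : A.PosDef) : mpow A 1 = A := by
  rw [mpow_eq_cfc hA.1]
  calc cfc (fun x : ℝ => x ^ (1:ℝ)) A = cfc (id : ℝ → ℝ) A :=
        cfc_congr fun x _ => Real.rpow_one x
    _ = A := cfc_id ℝ A hA.1

lemma mpow_zero' {A : Matrix m m ℂ} (hA : A.PosDef) : mpow A 0 = 1 := by
  rw [mpow_eq_cfc hA.1]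
  calc cfc (fun x : ℝ => x ^ (0:ℝ)) A = cfc (fun _ : ℝ => (1:ℝ)) A :=
        cfc_congr fun x _ => Real.rpow_zero x
    _ = 1 := cfc_const_one ℝ A hA.1

lemma mpow_inv {A : Matrix m m ℂ} (hA : A.PosDef) (r : ℝ) :
    (mpow A r)⁻¹ = mpow A (-r) := by
  apply Matrix.inv_eq_right_inv
  rw [mul_mpow hA, add_neg_cancel, mpow_zero' hA]

end Helpers

/-- `σ^{−α} (ρ σ^{−α})^{−α/(α−1)} = σ^{−α} ♯_{−α/(1−α)} ρ^{−1}`. -/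
theorem sigma_pow_geom_mean {n : ℕ} (ρ σ : Matrix (Fin n) (Fin n) ℂ)
    (hρ : ρ.PosDef) (hσ : σ.PosDef)
    (α : ℝ) (hα : α ∈ Set.Ioo (-1:ℝ) 1) (hα0 : α ≠ 0) :
    mpow σ (-α) * spow ρ σ α (-α/(α - 1)) = gmean (mpow σ (-α)) ρ⁻¹ (-α/(1 - α)) := by
  obtain ⟨hα1, hα2⟩ := hα
  have hB : (mpow σ (-(α/2))).PosDef := mpow_posDef hσ _
  have hBdet : IsUnit (mpow σ (-(α/2))).det := isUnit_iff_ne_zero.mpr hB.det_pos.ne'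
  set X : Matrix (Fin n) (Fin n) ℂ := mpow σ (-(α/2)) * ρ * mpow σ (-(α/2)) with hXdef
  have hX : X.PosDef := by
    have h2 := posDef_conj hρ hBdet
    rwa [hB.1.eq] at h2
  have e1 : mpow σ (-α) * mpow σ (α/2) = mpow σ (-(α/2)) := by
    rw [mul_mpow hσ, show -α + α/2 = -(α/2) from by ring]
  have e2 : mpow (mpow σ (-α)) (1/2) = mpow σ (-(α/2)) := by
    rw [mpow_mpow hσ, show -α * (1/2) = -(α/2) from by ring]
  have e3 : mpow (mpow σ (-α)) (-(1/2)) = mpow σ (α/2) := by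
    rw [mpow_mpow hσ, show -α * -(1/2) = α/2 from by ring]
  have e4 : mpow σ (α/2) * ρ⁻¹ * mpow σ (α/2) = mpow X (-1) := by
    have hXinv : X⁻¹ = mpow X (-1) := by
      rw [← mpow_inv hX 1, mpow_one' hX]
    rw [← hXinv, hXdef, Matrix.mul_inv_rev, Matrix.mul_inv_rev, mpow_inv hσ, neg_neg,
      Matrix.mul_assoc]
  have e5 : mpow (mpow X (-1)) (-α/(1-α)) = mpow X (-α/(α-1)) := by
    have h1 : (1:ℝ) - α ≠ 0 := by linarith
    have h2 : α - 1 ≠ 0 := by linarith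
    rw [mpow_mpow hX, show -1 * (-α/(1-α)) = -α/(α-1) from by field_simp; ring]
  rw [spow, gmean, e2, e3, e4, e5, ← Matrix.mul_assoc, ← Matrix.mul_assoc, e1]
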